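/- Suppose K_j, K : Ω × Ω → ℂ (Ω ⊆ ℂ open connected) are functions holomorphic in (ζ, z̄) (i.e. (ζ,w) ↦ K_j(ζ, w̄) is holomorphic), the family {K_j} is locally uniformly bounded, and K_j(z,z) → K(z,z) for every z ∈ Ω. Then K_j → K uniformly on compact subsets of Ω × Ω. -/

import Mathlib

open Complex Filter Metric Set

lemma lip1 {g : ℂ → ℂ} {c : ℂ} {r M : ℝ} (hr : 0 < r)
    (hd : DifferentiableOn ℂ g (ball c r))
    (hb : ∀ z ∈ ball c r, ‖g z‖ ≤ M) :
    ∀ z ∈ ball c r, dist (g z) (g c) ≤ ((2*M+1)/r) * dist z c := by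
  intro z hz
  have hcmem : c ∈ ball c r := mem_ball_self hr
  have hmaps : MapsTo g (ball c r) (ball (g c) (2*M+1)) := by
    intro w hw
    have h1 := hb w hw
    have h2 := hb c hcmem
    have hM : 0 ≤ M := le_trans (norm_nonneg _) h2
    rw [mem_ball, dist_eq_norm]
    calc ‖g w - g c‖ ≤ ‖g w‖ + ‖g c‖ := norm_sub_le _ _
    _ ≤ M + M := add_le_add h1 h2
    _ < 2*M+1 := by linarith
  exact Complex.dist_le_div_mul_dist_of_mapsTo_ball hd (hmaps.mono_right ball_subset_closedBall) hz

lemma lip2 {f : ℂ × ℂ → ℂ} {q : ℂ × ℂ} {r M : ℝ} (hr : 0 < r)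
    (hd : DifferentiableOn ℂ f (ball q (4*r)))
    (hb : ∀ p ∈ ball q (4*r), ‖f p‖ ≤ M) :
    ∀ p₁ ∈ ball q r, ∀ p₂ ∈ ball q r,
      dist (f p₁) (f p₂) ≤ (2*(2*M+1)/r) * dist p₁ p₂ := by
  intro p₁ hp₁ p₂ hp₂
  have hM : 0 ≤ M := le_trans (norm_nonneg _) (hb q (mem_ball_self (by linarith)))
  obtain ⟨a, b⟩ := p₁
  obtain ⟨a', b'⟩ := p₂
  rw [mem_ball, Prod.dist_eq, max_lt_iff] at hp₁ hp₂
  obtain ⟨ha, hb1⟩ := hp₁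
  obtain ⟨ha', hb'⟩ := hp₂
  simp only at ha hb1 ha' hb'
  have hsub1 : MapsTo (fun w => (a, w)) (ball b' (3*r)) (ball q (4*r)) := by
    intro w hw
    rw [mem_ball, Prod.dist_eq, max_lt_iff]
    refine ⟨by simpa using lt_trans ha (by linarith), ?_⟩
    simp only
    calc dist w q.2 ≤ dist w b' + dist b' q.2 := dist_triangle _ _ _
    _ < 3*r + r := add_lt_add (mem_ball.mp hw) hb'
    _ = 4*r := by ring
  have hsub2 : MapsTo (fun ζ => (ζ, b')) (ball a' (3*r)) (ball q (4*r)) := by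
    intro ζ hζ
    rw [mem_ball, Prod.dist_eq, max_lt_iff]
    refine ⟨?_, by simpa using lt_trans hb' (by linarith)⟩
    simp only
    calc dist ζ q.1 ≤ dist ζ a' + dist a' q.1 := dist_triangle _ _ _
    _ < 3*r + r := add_lt_add (mem_ball.mp hζ) ha'
    _ = 4*r := by ring
  have hd1 : DifferentiableOn ℂ (fun w => f (a, w)) (ball b' (3*r)) :=
    hd.comp ((differentiable_const a).prodMk differentiable_id).differentiableOn hsub1
  have hd2 : DifferentiableOn ℂ (fun ζ => f (ζ, b')) (ball a' (3*r)) :=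
    hd.comp (differentiable_id.prodMk (differentiable_const b')).differentiableOn hsub2
  have hbmem : b ∈ ball b' (3*r) := by
    rw [mem_ball]
    calc dist b b' ≤ dist b q.2 + dist q.2 b' := dist_triangle _ _ _
    _ < r + r := add_lt_add hb1 (by rwa [dist_comm] at hb')
    _ ≤ 3*r := by linarith
  have hamem : a ∈ ball a' (3*r) := by
    rw [mem_ball]
    calc dist a a' ≤ dist a q.1 + dist q.1 a' := dist_triangle _ _ _
    _ < r + r := add_lt_add ha (by rwa [dist_comm] at ha')
    _ ≤ 3*r := by linarith
  have h1 : dist (f (a, b)) (f (a, b')) ≤ ((2*M+1)/(3*r)) * dist b b' :=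
    lip1 (by linarith) hd1 (fun w hw => hb _ (hsub1 hw)) b hbmem
  have h2 : dist (f (a, b')) (f (a', b')) ≤ ((2*M+1)/(3*r)) * dist a a' :=
    lip1 (by linarith) hd2 (fun ζ hζ => hb _ (hsub2 hζ)) a hamem
  have hdb : dist b b' ≤ dist (a, b) (a', b') := by
    rw [Prod.dist_eq]; exact le_max_right _ _
  have hda : dist a a' ≤ dist (a, b) (a', b') := by
    rw [Prod.dist_eq]; exact le_max_left _ _
  have hfrac : (2*M+1)/(3*r) ≤ (2*M+1)/r :=
    div_le_div_of_nonneg_left (by linarith) hr (by linarith)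
  have hdnn : 0 ≤ dist (a, b) (a', b') := dist_nonneg
  calc dist (f (a, b)) (f (a', b'))
      ≤ dist (f (a, b)) (f (a, b')) + dist (f (a, b')) (f (a', b')) := dist_triangle _ _ _
    _ ≤ ((2*M+1)/(3*r)) * dist b b' + ((2*M+1)/(3*r)) * dist a a' := add_le_add h1 h2
    _ ≤ ((2*M+1)/r) * dist (a,b) (a',b') + ((2*M+1)/r) * dist (a,b) (a',b') :=
        add_le_add (mul_le_mul hfrac hdb dist_nonneg (by positivity))
          (mul_le_mul hfrac hda dist_nonneg (by positivity))
    _ = (2*(2*M+1)/r) * dist (a,b) (a',b') := by ring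


local notation "conj'" => (starRingEnd ℂ)

lemma conj_image_eq_preimage (Ω : Set ℂ) : conj' '' Ω = conj' ⁻¹' Ω := by
  ext w
  constructor
  · rintro ⟨z, hz, rfl⟩
    simpa [Complex.conj_conj] using hz
  · intro hw
    exact ⟨conj' w, hw, by simp [Complex.conj_conj]⟩

/-- a sequence of positive reals tending to 0 within the punctured nbhd -/
lemma freq_zero_of_real_zeros {ψ : ℂ → ℂ} {ρ : ℝ} (hρ : 0 < ρ)
    (h : ∀ x : ℝ, |x| < ρ → ψ (x : ℂ) = 0) :
    ∃ᶠ z in nhdsWithin (0:ℂ) {(0:ℂ)}ᶜ, ψ z = 0 := by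
  have htend : Tendsto (fun n : ℕ => ((ρ / (n + 2) : ℝ) : ℂ)) atTop
      (nhdsWithin (0:ℂ) {(0:ℂ)}ᶜ) := by
    rw [tendsto_nhdsWithin_iff]
    constructor
    · have : Tendsto (fun n : ℕ => (ρ / (n + 2) : ℝ)) atTop (nhds 0) := by
        apply Tendsto.div_atTop (tendsto_const_nhds)
        exact tendsto_atTop_add_const_right _ 2 tendsto_natCast_atTop_atTop
      have h2 := (Complex.continuous_ofReal.tendsto 0).comp this
      rw [show ((0:ℂ)) = ((0:ℝ):ℂ) by simp]
      exact h2
    · filter_upwards with n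
      simp only [mem_compl_iff, mem_singleton_iff]
      intro hc
      have : (ρ / (n + 2) : ℝ) = 0 := by exact_mod_cast hc
      have hpos : 0 < (ρ / (n + 2) : ℝ) := by positivity
      linarith
  apply htend.frequently
  apply Frequently.of_forall
  intro n
  apply h
  have hn2 : (1:ℝ) ≤ (n:ℝ) + 2 := by
    have := Nat.cast_nonneg (α := ℝ) n
    linarith
  rw [abs_of_pos (by positivity)]
  calc ρ / ((n:ℝ) + 2) ≤ ρ / 2 := by
        apply div_le_div_of_nonneg_left hρ.le two_pos (by linarith)
  _ < ρ := by linarith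

lemma eq_of_diag {Ω : Set ℂ} (hΩ : IsOpen Ω) (hconn : IsConnected Ω) {g f : ℂ × ℂ → ℂ}
    (hg : ∀ A : ℂ → ℂ × ℂ, Differentiable ℂ A →
      DifferentiableOn ℂ (fun z => g (A z)) (A ⁻¹' (Ω ×ˢ (conj' '' Ω))))
    (hf : DifferentiableOn ℂ f (Ω ×ˢ (conj' '' Ω)))
    (hdg : ∀ z ∈ Ω, g (z, conj' z) = f (z, conj' z)) :
    EqOn g f (Ω ×ˢ (conj' '' Ω)) := by
  have himg := conj_image_eq_preimage Ω
  have hΩc : IsOpen (conj' '' Ω) := by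
    rw [himg]; exact hΩ.preimage Complex.continuous_conj
  have hΩ' : IsOpen (Ω ×ˢ (conj' '' Ω)) := hΩ.prod hΩc
  set d : ℂ × ℂ → ℂ := fun p => g p - f p with hd_def
  -- Step 1: local vanishing near each diagonal point
  have step1 : ∀ a ∈ Ω, ∃ ρ > 0, ∀ p ∈ ball ((a, conj' a) : ℂ × ℂ) ρ, d p = 0 := by
    intro a ha
    obtain ⟨r, hr, hball⟩ := Metric.isOpen_iff.mp hΩ a ha
    set ρ := r / 2 with hρ_def
    have hρ : 0 < ρ := by positivity
    -- the affine change of variables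
    set L : ℂ → ℂ → ℂ × ℂ := fun u v => (a + (u + I * v), conj' a + (u - I * v)) with hL_def
    have hLmem : ∀ u v : ℂ, ‖u‖ < ρ → ‖v‖ < ρ →
        L u v ∈ Ω ×ˢ (conj' '' Ω) := by
      intro u v hu hv
      constructor
      · apply hball
        rw [mem_ball, dist_eq]
        have : a + (u + I * v) - a = u + I * v := by ring
        rw [this]
        calc ‖u + I * v‖ ≤ ‖u‖ + ‖I * v‖ :=
              norm_add_le _ _
        _ = ‖u‖ + ‖v‖ := by simp
        _ < ρ + ρ := add_lt_add hu hv
        _ = r := by rw [hρ_def]; ring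
      · rw [himg, mem_preimage]
        apply hball
        rw [mem_ball, dist_eq]
        have heq : conj' (conj' a + (u - I * v)) - a = conj' u + I * conj' v := by
          simp only [map_add, map_sub, map_mul, Complex.conj_conj, Complex.conj_I]
          ring
        rw [heq]
        calc ‖conj' u + I * conj' v‖
            ≤ ‖conj' u‖ + ‖I * conj' v‖ := norm_add_le _ _
        _ = ‖u‖ + ‖v‖ := by simp
        _ < ρ + ρ := add_lt_add hu hv
        _ = r := by rw [hρ_def]; ring
    have hreal : ∀ x y : ℝ, ‖(x:ℂ)‖ < ρ → ‖(y:ℂ)‖ < ρ →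
        d (L (x:ℂ) (y:ℂ)) = 0 := by
      intro x y hx hy
      have hz : (a + ((x:ℂ) + I * (y:ℂ))) ∈ Ω := (hLmem _ _ hx hy).1
      have hc : conj' (a + ((x:ℂ) + I * (y:ℂ))) = conj' a + ((x:ℂ) - I * (y:ℂ)) := by
        simp only [map_add, map_mul, Complex.conj_I, Complex.conj_ofReal]
        ring
      have := hdg _ hz
      simp only [hd_def]
      rw [hL_def]
      simp only
      rw [← hc]
      rw [this]
      ring
    -- Step B : for real y, φ(·, y) vanishes on the complex ball
    have stepB : ∀ y : ℝ, ‖(y:ℂ)‖ < ρ → ∀ u ∈ ball (0:ℂ) ρ,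
        d (L u (y:ℂ)) = 0 := by
      intro y hy
      set ψ : ℂ → ℂ := fun u => d (L u (y:ℂ)) with hψ_def
      have hmapsψ : MapsTo (fun u => L u (y:ℂ)) (ball (0:ℂ) ρ) (Ω ×ˢ (conj' '' Ω)) := by
        intro u hu
        exact hLmem u _ (by simpa [dist_eq] using mem_ball.mp hu) hy
      have hdiffL : Differentiable ℂ (fun u => L u (y:ℂ)) := by
        rw [hL_def]
        exact ((differentiable_id.add_const (I * (y:ℂ))).const_add a).prodMk
          ((differentiable_id.sub_const (I * (y:ℂ))).const_add (conj' a))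
      have hdψ : DifferentiableOn ℂ ψ (ball (0:ℂ) ρ) :=
        ((hg _ hdiffL).mono hmapsψ).sub (hf.comp hdiffL.differentiableOn hmapsψ)
      have hψreal : ∀ x : ℝ, |x| < ρ → ψ (x:ℂ) = 0 := by
        intro x hx
        exact hreal x y (by simpa using hx) hy
      have hana : AnalyticOnNhd ℂ ψ (ball (0:ℂ) ρ) :=
        hdψ.analyticOnNhd isOpen_ball
      have := hana.eqOn_zero_of_preconnected_of_frequently_eq_zero
        (convex_ball _ _).isPreconnected (mem_ball_self hρ)
        (freq_zero_of_real_zeros hρ hψreal)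
      intro u hu
      exact this hu
    -- Step C : for complex u, v
    have stepC : ∀ u ∈ ball (0:ℂ) ρ, ∀ v ∈ ball (0:ℂ) ρ, d (L u v) = 0 := by
      intro u hu
      set χ : ℂ → ℂ := fun v => d (L u v) with hχ_def
      have hmapsχ : MapsTo (fun v => L u v) (ball (0:ℂ) ρ) (Ω ×ˢ (conj' '' Ω)) := by
        intro v hv
        exact hLmem u v (by simpa [dist_eq] using mem_ball.mp hu)
          (by simpa [dist_eq] using mem_ball.mp hv)
      have hdiffL : Differentiable ℂ (fun v => L u v) := by
        rw [hL_def]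
        exact (((differentiable_id.const_mul I).const_add u).const_add a).prodMk
          (((differentiable_id.const_mul I).const_sub u).const_add (conj' a))
      have hdχ : DifferentiableOn ℂ χ (ball (0:ℂ) ρ) :=
        ((hg _ hdiffL).mono hmapsχ).sub (hf.comp hdiffL.differentiableOn hmapsχ)
      have hχreal : ∀ y : ℝ, |y| < ρ → χ (y:ℂ) = 0 := by
        intro y hy
        exact stepB y (by simpa using hy) u hu
      have hana : AnalyticOnNhd ℂ χ (ball (0:ℂ) ρ) :=
        hdχ.analyticOnNhd isOpen_ball
      have := hana.eqOn_zero_of_preconnected_of_frequently_eq_zero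
        (convex_ball _ _).isPreconnected (mem_ball_self hρ)
        (freq_zero_of_real_zeros hρ hχreal)
      intro v hv
      exact this hv
    refine ⟨ρ, hρ, ?_⟩
    rintro ⟨p₁, p₂⟩ hp
    rw [mem_ball, Prod.dist_eq, max_lt_iff] at hp
    obtain ⟨h1, h2⟩ := hp
    simp only at h1 h2
    set u : ℂ := ((p₁ - a) + (p₂ - conj' a)) / 2 with hu_def
    set v : ℂ := ((p₁ - a) - (p₂ - conj' a)) / (2 * I) with hv_def
    have hLp : L u v = (p₁, p₂) := by
      rw [hL_def]
      have h2I : (2 : ℂ) * I ≠ 0 := by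
        simp [Complex.I_ne_zero]
      simp only [Prod.mk.injEq]
      constructor
      · rw [hu_def, hv_def]
        field_simp
        ring
      · rw [hu_def, hv_def]
        field_simp
        ring
    have hu : ‖u‖ < ρ := by
      rw [hu_def]
      rw [norm_div]
      simp only [Complex.norm_two]
      rw [div_lt_iff₀ (by norm_num : (0:ℝ) < 2)]
      calc ‖(p₁ - a) + (p₂ - conj' a)‖
          ≤ ‖p₁ - a‖ + ‖p₂ - conj' a‖ := norm_add_le _ _
      _ < ρ + ρ := add_lt_add (by rwa [dist_eq] at h1) (by rwa [dist_eq] at h2)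
      _ = ρ * 2 := by ring
    have hv : ‖v‖ < ρ := by
      rw [hv_def, norm_div]
      have : ‖(2:ℂ) * I‖ = 2 := by simp
      rw [this, div_lt_iff₀ (by norm_num : (0:ℝ) < 2)]
      calc ‖(p₁ - a) - (p₂ - conj' a)‖
          ≤ ‖p₁ - a‖ + ‖p₂ - conj' a‖ := by
            simpa using norm_sub_le (p₁ - a) (p₂ - conj' a)
      _ < ρ + ρ := add_lt_add (by rwa [dist_eq] at h1) (by rwa [dist_eq] at h2)
      _ = ρ * 2 := by ring
    have := stepC u (by simpa [dist_eq] using hu) v (by simpa [dist_eq] using hv)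
    rwa [hLp] at this
  -- Step 2: globalize via one-variable identity theorem in the second variable
  have hΩc_conn : IsPreconnected (conj' '' Ω) :=
    (hconn.isPreconnected).image _ (Complex.continuous_conj.continuousOn)
  rintro ⟨p₁, p₂⟩ ⟨hp₁, hp₂⟩
  simp only at hp₁ hp₂
  obtain ⟨ρ, hρ, hloc⟩ := step1 p₁ hp₁
  set hw : ℂ → ℂ := fun w => d (p₁, w) with hw_def
  have hmaps : MapsTo (fun w => ((p₁ : ℂ), w)) (conj' '' Ω) (Ω ×ˢ (conj' '' Ω)) :=
    fun w hwmem => ⟨hp₁, hwmem⟩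
  have hAw : Differentiable ℂ (fun w : ℂ => ((p₁ : ℂ), w)) :=
    (differentiable_const _).prodMk differentiable_id
  have hdw : DifferentiableOn ℂ hw (conj' '' Ω) :=
    ((hg _ hAw).mono hmaps).sub (hf.comp hAw.differentiableOn hmaps)
  have hana : AnalyticOnNhd ℂ hw (conj' '' Ω) := hdw.analyticOnNhd hΩc
  have hmem : conj' p₁ ∈ conj' '' Ω := ⟨p₁, hp₁, rfl⟩
  have hev : hw =ᶠ[nhds (conj' p₁)] 0 := by
    filter_upwards [Metric.ball_mem_nhds (conj' p₁) hρ] with w hwball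
    apply hloc
    rw [mem_ball, Prod.dist_eq, max_lt_iff]
    exact ⟨by simpa using hρ, by simpa using mem_ball.mp hwball⟩
  have := hana.eqOn_zero_of_preconnected_of_eventuallyEq_zero hΩc_conn hmem hev
  have hzero : d (p₁, p₂) = 0 := by
    have h := this hp₂
    simpa using h
  exact sub_eq_zero.mp hzero


/-- If kernels `K_j` on `Ω × Ω` are holomorphic in `(ζ, z̄)`, locally uniformly bounded,
and converge on the diagonal to a kernel `K` of the same type, then `K_j → K` uniformly
on compact subsets of `Ω × Ω`. -/
theorem kernels_converge_from_diagonal (Ω : Set ℂ) (hΩ : IsOpen Ω) (hconn : IsConnected Ω)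
    (Kj : ℕ → ℂ → ℂ → ℂ) (K : ℂ → ℂ → ℂ)
    (hKj : ∀ j, DifferentiableOn ℂ (fun p : ℂ × ℂ => Kj j p.1 ((starRingEnd ℂ) p.2))
      (Ω ×ˢ ((starRingEnd ℂ) '' Ω)))
    (hK : DifferentiableOn ℂ (fun p : ℂ × ℂ => K p.1 ((starRingEnd ℂ) p.2))
      (Ω ×ˢ ((starRingEnd ℂ) '' Ω)))
    (hbdd : ∀ C ⊆ Ω ×ˢ Ω, IsCompact C → ∃ M : ℝ, ∀ j, ∀ p ∈ C, ‖Kj j p.1 p.2‖ ≤ M)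
    (hdiag : ∀ z ∈ Ω, Tendsto (fun j => Kj j z z) atTop (nhds (K z z))) :
    ∀ C ⊆ Ω ×ˢ Ω, IsCompact C →
      TendstoUniformlyOn (fun j (p : ℂ × ℂ) => Kj j p.1 p.2)
        (fun p : ℂ × ℂ => K p.1 p.2) atTop C := by
  intro C hC hCcpt
  classical
  have himg := conj_image_eq_preimage Ω
  have hΩc : IsOpen ((starRingEnd ℂ) '' Ω) := by
    rw [himg]; exact hΩ.preimage Complex.continuous_conj
  set Ω' : Set (ℂ × ℂ) := Ω ×ˢ ((starRingEnd ℂ) '' Ω) with hΩ'_def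
  have hΩ'open : IsOpen Ω' := hΩ.prod hΩc
  set fj : ℕ → ℂ × ℂ → ℂ := fun j p => Kj j p.1 ((starRingEnd ℂ) p.2) with hfj_def
  set fK : ℂ × ℂ → ℂ := fun p => K p.1 ((starRingEnd ℂ) p.2) with hfK_def
  have hfjd : ∀ j, DifferentiableOn ℂ (fj j) Ω' := hKj
  have hfKd : DifferentiableOn ℂ fK Ω' := hK
  set σ : ℂ × ℂ → ℂ × ℂ := fun p => (p.1, (starRingEnd ℂ) p.2) with hσ_def
  have hσcont : Continuous σ :=
    continuous_fst.prodMk (Complex.continuous_conj.comp continuous_snd)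
  have hmemσ : ∀ p ∈ Ω', σ p ∈ Ω ×ˢ Ω := by
    intro p hp
    refine ⟨hp.1, ?_⟩
    have := hp.2
    rw [himg] at this
    exact this
  -- local uniform bounds for the fj
  have hbnd' : ∀ Q ⊆ Ω', IsCompact Q → ∃ M : ℝ, ∀ j, ∀ p ∈ Q, ‖fj j p‖ ≤ M := by
    intro Q hQ hQc
    obtain ⟨M, hM⟩ := hbdd (σ '' Q)
      (by rintro _ ⟨p, hp, rfl⟩; exact hmemσ p (hQ hp)) (hQc.image hσcont)
    exact ⟨M, fun j p hp => hM j (σ p) (mem_image_of_mem _ hp)⟩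
  haveI : LocallyCompactSpace Ω' := hΩ'open.locallyCompactSpace
  haveI : SigmaCompactSpace Ω' := by infer_instance
  haveI : FirstCountableTopology C(Ω', ℂ) := UniformSpace.firstCountableTopology _
  -- the continuous maps on the subtype
  set Gj : ℕ → C(Ω', ℂ) := fun j => ⟨Ω'.restrict (fj j), ((hfjd j).continuousOn).restrict⟩
    with hGj_def
  set GK : C(Ω', ℂ) := ⟨Ω'.restrict fK, hfKd.continuousOn.restrict⟩ with hGK_def
  -- equicontinuity
  have hequi : Equicontinuous (fun j => ⇑(Gj j)) := by
    intro x₀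
    rw [equicontinuousAt_iff]
    intro ε hε
    obtain ⟨ε₀, hε₀, hball⟩ := Metric.isOpen_iff.mp hΩ'open x₀.1 x₀.2
    set r : ℝ := ε₀ / 5 with hr_def
    have hrpos : 0 < r := by positivity
    have hsub4 : closedBall (x₀ : ℂ × ℂ) (4*r) ⊆ Ω' :=
      subset_trans (closedBall_subset_ball (by rw [hr_def]; linarith)) hball
    obtain ⟨M, hM⟩ := hbnd' (closedBall (x₀ : ℂ × ℂ) (4*r)) hsub4 (isCompact_closedBall _ _)
    have hM0 : 0 ≤ M := le_trans (norm_nonneg _)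
      (hM 0 x₀.1 (mem_closedBall_self (by positivity)))
    set L : ℝ := 2*(2*M+1)/r with hL_def
    have hL0 : 0 ≤ L := by positivity
    have hL1 : 0 < L + 1 := by linarith
    refine ⟨min r (ε / (L+1)), by positivity, ?_⟩
    intro x hx j
    have hd : dist (x : ℂ × ℂ) (x₀ : ℂ × ℂ) < min r (ε/(L+1)) := by
      rwa [← Subtype.dist_eq]
    have hx_ball : (x : ℂ × ℂ) ∈ ball (x₀ : ℂ × ℂ) r :=
      mem_ball.mpr (lt_of_lt_of_le hd (min_le_left _ _))
    have hx₀_ball : (x₀ : ℂ × ℂ) ∈ ball (x₀ : ℂ × ℂ) r := mem_ball_self hrpos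
    have hlip := lip2 hrpos
      ((hfjd j).mono (subset_trans ball_subset_closedBall hsub4))
      (fun p hp => hM j p (ball_subset_closedBall hp))
      (x₀ : ℂ × ℂ) hx₀_ball (x : ℂ × ℂ) hx_ball
    have hdle : dist (x₀ : ℂ × ℂ) (x : ℂ × ℂ) ≤ ε/(L+1) := by
      rw [dist_comm]
      exact le_of_lt (lt_of_lt_of_le hd (min_le_right _ _))
    calc dist ((Gj j) x₀) ((Gj j) x) = dist (fj j (x₀ : ℂ × ℂ)) (fj j (x : ℂ × ℂ)) := rfl
      _ ≤ L * dist (x₀ : ℂ × ℂ) (x : ℂ × ℂ) := hlip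
      _ ≤ L * (ε/(L+1)) := mul_le_mul_of_nonneg_left hdle hL0
      _ = ε * L / (L+1) := by ring
      _ < ε := by rw [div_lt_iff₀ hL1]; nlinarith
  -- Arzela-Ascoli
  set s : Set C(Ω', ℂ) := Set.range Gj with hs_def
  have hclemb : Topology.IsClosedEmbedding
      (⇑(UniformOnFun.ofFun {Q : Set Ω' | IsCompact Q}) ∘
        (DFunLike.coe : C(Ω', ℂ) → Ω' → ℂ)) := by
    have h1 : (⇑(UniformOnFun.ofFun {Q : Set Ω' | IsCompact Q}) ∘
        (DFunLike.coe : C(Ω', ℂ) → Ω' → ℂ)) = ContinuousMap.toUniformOnFunIsCompact := rfl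
    rw [h1]
    refine ⟨ContinuousMap.isUniformEmbedding_toUniformOnFunIsCompact.isEmbedding, ?_⟩
    rw [ContinuousMap.range_toUniformOnFunIsCompact]
    exact UniformOnFun.isClosed_setOf_continuous
      CompactlyCoherentSpace.isCoherentWith
  have hequi_s : ∀ (Kc : Set Ω'), IsCompact Kc → EquicontinuousOn
      ((DFunLike.coe : C(Ω', ℂ) → Ω' → ℂ) ∘ (Subtype.val : s → C(Ω', ℂ))) Kc := by
    intro Kc _ x _
    intro U hU
    have h2 := hequi x U hU
    apply Eventually.filter_mono nhdsWithin_le_nhds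
    filter_upwards [h2] with x' h' i
    obtain ⟨j, hj⟩ := i.2
    simp only [Function.comp_apply]
    rw [← hj]
    exact h' j
  have hpt : ∀ (Kc : Set Ω'), IsCompact Kc → ∀ x ∈ Kc, ∃ Q, IsCompact Q ∧
      ∀ i ∈ s, (DFunLike.coe : C(Ω', ℂ) → Ω' → ℂ) i x ∈ Q := by
    intro Kc _ x _
    obtain ⟨M, hM⟩ := hbnd' {(x : ℂ × ℂ)} (by simpa using x.2) isCompact_singleton
    refine ⟨Metric.closedBall 0 M, isCompact_closedBall _ _, ?_⟩
    rintro i ⟨j, rfl⟩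
    have h := hM j (x : ℂ × ℂ) rfl
    rw [mem_closedBall, dist_zero_right]
    exact h
  have hcls : IsCompact (closure s) :=
    ArzelaAscoli.isCompact_closure_of_isClosedEmbedding (fun Q hQ => hQ) hclemb hequi_s hpt
  have hseq : IsSeqCompact (closure s) := hcls.isSeqCompact
  -- transfer of uniform convergence from the subtype to ambient compacts
  have transfer : ∀ (A : ℕ → C(Ω', ℂ)) (B : ℕ → ℂ × ℂ → ℂ) (g : C(Ω', ℂ)) (gb : ℂ × ℂ → ℂ),
      (∀ n p (hp : p ∈ Ω'), B n p = A n ⟨p, hp⟩) → (∀ p (hp : p ∈ Ω'), gb p = g ⟨p, hp⟩) →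
      Tendsto A atTop (nhds g) → ∀ Q, Q ⊆ Ω' → IsCompact Q →
      TendstoUniformlyOn B gb atTop Q := by
    intro A B g gb hB hg htend Q hQsub hQc
    have hKc : IsCompact (Subtype.val ⁻¹' Q : Set Ω') := by
      rw [Subtype.isCompact_iff]
      have himgQ : Subtype.val '' (Subtype.val ⁻¹' Q : Set Ω') = Q := by
        ext q
        constructor
        · rintro ⟨y, hy, rfl⟩; exact hy
        · intro hq; exact ⟨⟨q, hQsub hq⟩, hq, rfl⟩
      rw [himgQ]; exact hQc
    have huk := ContinuousMap.tendsto_iff_forall_isCompact_tendstoUniformlyOn.mp htend _ hKc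
    rw [Metric.tendstoUniformlyOn_iff] at huk ⊢
    intro ε hε
    filter_upwards [huk ε hε] with n hn p hp
    have h := hn ⟨p, hQsub hp⟩ hp
    rwa [← hB n p (hQsub hp), ← hg p (hQsub hp)] at h
  -- the main convergence in C(Ω', ℂ)
  have key : Tendsto Gj atTop (nhds GK) := by
    apply tendsto_of_subseq_tendsto
    intro ns hns
    obtain ⟨g, hgmem, φ, hφ, hφtend⟩ :=
      hseq (x := fun n => Gj (ns n)) (fun n => subset_closure (mem_range_self _))
    refine ⟨φ, ?_⟩
    set gh : ℂ × ℂ → ℂ := fun p => if hp : p ∈ Ω' then g ⟨p, hp⟩ else 0 with hgh_def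
    have hghg : ∀ p (hp : p ∈ Ω'), gh p = g ⟨p, hp⟩ := fun p hp => dif_pos hp
    have htlu : TendstoLocallyUniformlyOn (fun n => fj (ns (φ n))) gh atTop Ω' := by
      rw [tendstoLocallyUniformlyOn_iff_forall_isCompact hΩ'open]
      intro Q hQsub hQc
      exact transfer _ _ _ _ (fun n p hp => rfl) hghg hφtend Q hQsub hQc
    -- gh is holomorphic along holomorphic curves
    have hghslice : ∀ A : ℂ → ℂ × ℂ, Differentiable ℂ A →
        DifferentiableOn ℂ (fun z => gh (A z)) (A ⁻¹' Ω') := by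
      intro A hA
      have hopen : IsOpen (A ⁻¹' Ω') := hΩ'open.preimage hA.continuous
      have hmapsA : MapsTo A (A ⁻¹' Ω') Ω' := fun z hz => hz
      have htluA := htlu.comp A hmapsA hA.continuous.continuousOn
      exact htluA.differentiableOn
        (Eventually.of_forall (fun n => (hfjd _).comp hA.differentiableOn hmapsA)) hopen
    -- gh agrees with fK on the diagonal
    have hdiaggh : ∀ z ∈ Ω, gh (z, (starRingEnd ℂ) z) = fK (z, (starRingEnd ℂ) z) := by
      intro z hz
      have hmem : ((z, (starRingEnd ℂ) z) : ℂ × ℂ) ∈ Ω' := ⟨hz, mem_image_of_mem _ hz⟩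
      set xpt : Ω' := ⟨(z, (starRingEnd ℂ) z), hmem⟩ with hxpt_def
      have hpt2 : Tendsto (fun n => (Gj (ns (φ n))) xpt) atTop (nhds (g xpt)) :=
        ((continuous_eval_const xpt).tendsto g).comp hφtend
      have hval : ∀ n, (Gj (ns (φ n))) xpt = Kj (ns (φ n)) z z := by
        intro n
        show fj (ns (φ n)) (z, (starRingEnd ℂ) z) = Kj (ns (φ n)) z z
        rw [hfj_def]
        simp [Complex.conj_conj]
      rw [show (fun n => (Gj (ns (φ n))) xpt) = (fun n => Kj (ns (φ n)) z z)
        from funext hval] at hpt2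
      have hd2 : Tendsto (fun n => Kj (ns (φ n)) z z) atTop (nhds (K z z)) :=
        (hdiag z hz).comp (hns.comp (hφ.tendsto_atTop))
      have hgK : g xpt = K z z := tendsto_nhds_unique hpt2 hd2
      rw [hghg _ hmem]
      show g xpt = fK (z, (starRingEnd ℂ) z)
      rw [hgK, hfK_def]
      simp [Complex.conj_conj]
    have hEq : EqOn gh fK Ω' := eq_of_diag hΩ hconn hghslice hfKd hdiaggh
    have hgGK : g = GK := by
      ext x
      have h1 : gh (x : ℂ × ℂ) = g x := hghg _ x.2
      have h2 : gh (x : ℂ × ℂ) = fK (x : ℂ × ℂ) := hEq x.2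
      show g x = GK x
      rw [← h1, h2]
      rfl
    rw [hgGK] at hφtend
    exact hφtend
  -- conclude
  have hCσ : σ '' C ⊆ Ω' := by
    rintro _ ⟨p, hp, rfl⟩
    exact ⟨(hC hp).1, mem_image_of_mem _ (hC hp).2⟩
  have hCσc : IsCompact (σ '' C) := hCcpt.image hσcont
  have hunif : TendstoUniformlyOn fj fK atTop (σ '' C) :=
    transfer Gj fj GK fK (fun n p hp => rfl) (fun p hp => rfl) key _ hCσ hCσc
  rw [Metric.tendstoUniformlyOn_iff] at hunif ⊢
  intro ε hε
  filter_upwards [hunif ε hε] with j hj p hp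
  have h := hj (σ p) (mem_image_of_mem _ hp)
  rw [hfj_def, hfK_def, hσ_def] at h
  simpa [Complex.conj_conj] using h
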